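/- Any algorithm that observes i.i.d. flips of a coin with heads probability either 1/2 + ε or 1/2 − ε and outputs a guess of which bias is the true one, using fewer than c·ε^{-2}·ln(1/δ) flips (for a suitable universal constant c > 0, with 0 < ε < 1/4 and 0 < δ < 1/4), must err with probability greater than δ for at least one of the two biases. -/

import Mathlib

open MeasureTheory ProbabilityTheory
open scoped ENNReal

/-- The law of a single coin flip with heads probability `p` (heads = `true`). -/
noncomputable def bernMeasure (p : ℝ) : Measure Bool :=
  (PMF.bernoulli (min (Real.toNNReal p) 1) (min_le_right _ _)).toMeasure

/-- The law of `n` i.i.d. flips of a coin with heads probability `p`. -/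
noncomputable def coinMeasure (n : ℕ) (p : ℝ) : Measure (Fin n → Bool) :=
  Measure.pi fun _ => bernMeasure p

instance bernMeasure.instIsProbabilityMeasure (p : ℝ) :
    IsProbabilityMeasure (bernMeasure p) :=
  PMF.toMeasure.isProbabilityMeasure _

instance coinMeasure.instIsProbabilityMeasure (n : ℕ) (p : ℝ) :
    IsProbabilityMeasure (coinMeasure n p) := by
  unfold coinMeasure; infer_instance

lemma bernMeasure_singleton {r : ℝ} (h0 : 0 ≤ r) (h1 : r ≤ 1) (b : Bool) :
    bernMeasure r {b} = ENNReal.ofReal (if b then r else 1 - r) := by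
  have hmin : min (Real.toNNReal r) 1 = Real.toNNReal r :=
    min_eq_left (Real.toNNReal_le_one.mpr h1)
  rw [bernMeasure, PMF.toMeasure_apply_singleton _ _ (measurableSet_singleton b),
    PMF.bernoulli_apply, hmin]
  cases b
  · show ((1 - Real.toNNReal r : NNReal) : ℝ≥0∞) = ENNReal.ofReal (1 - r)
    rw [ENNReal.coe_sub, ENNReal.coe_one]
    show 1 - ENNReal.ofReal r = ENNReal.ofReal (1 - r)
    rw [ENNReal.ofReal_sub 1 h0, ENNReal.ofReal_one]
  · rfl

lemma coinMeasure_singleton {n : ℕ} {r : ℝ} (h0 : 0 ≤ r) (h1 : r ≤ 1)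
    (x : Fin n → Bool) :
    coinMeasure n r {x} = ENNReal.ofReal (∏ i, if x i then r else 1 - r) := by
  rw [coinMeasure, ← Set.univ_pi_singleton, Measure.pi_pi,
    ENNReal.ofReal_prod_of_nonneg]
  · exact Finset.prod_congr rfl fun i _ => bernMeasure_singleton h0 h1 (x i)
  · intro i _
    by_cases h : x i <;> simp [h] <;> linarith

set_option maxHeartbeats 1000000 in
/-- Sample-complexity lower bound for distinguishing a `(1/2−ε, 1/2+ε)`-biased coin:
there is a universal constant `c > 0` such that any (possibly randomized) algorithm using
fewer than `c·ε⁻²·ln(1/δ)` flips errs with probability greater than `δ` under at least one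
of the two biases (`A` outputs `true` for the guess "heads probability is 1/2+ε"). -/
theorem coin_distinguishing_lower_bound :
    ∃ c : ℝ, 0 < c ∧
      ∀ (ε δ : ℝ), 0 < ε → ε < 1 / 4 → 0 < δ → δ < 1 / 4 →
      ∀ n : ℕ, (n : ℝ) < c * ε⁻¹ ^ 2 * Real.log (1 / δ) →
      ∀ (Ω' : Type) (_ : MeasurableSpace Ω') (ν : Measure Ω'), IsProbabilityMeasure ν →
      ∀ A : (Fin n → Bool) → Ω' → Bool,
        ENNReal.ofReal δ <
            ((coinMeasure n (1 / 2 + ε)).prod ν) {p | A p.1 p.2 = false} ∨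
        ENNReal.ofReal δ <
            ((coinMeasure n (1 / 2 - ε)).prod ν) {p | A p.1 p.2 = true} := by
  refine ⟨1/100, by norm_num, ?_⟩
  intro ε δ hε hε4 hδ hδ4 n hn Ω' mΩ' ν hν A
  by_contra hcon
  push_neg at hcon
  obtain ⟨h1, h2⟩ := hcon
  haveI := hν
  set p : ℝ := 1/2 + ε with hp_def
  set q : ℝ := 1/2 - ε with hq_def
  have hp0 : (0:ℝ) ≤ p := by simp only [hp_def]; linarith
  have hp1 : p ≤ 1 := by simp only [hp_def]; linarith
  have hq0 : (0:ℝ) ≤ q := by simp only [hq_def]; linarith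
  have hq1 : q ≤ 1 := by simp only [hq_def]; linarith
  set W : ℝ → (Fin n → Bool) → ℝ := fun r x => ∏ i, if x i then r else 1 - r with hW_def
  have hWnn : ∀ (r : ℝ), 0 ≤ r → r ≤ 1 → ∀ x : (Fin n → Bool), 0 ≤ W r x := by
    intro r hr0 hr1 x
    apply Finset.prod_nonneg
    intro i _
    by_cases h : x i <;> simp [h] <;> linarith
  set P : Measure (Fin n → Bool) := coinMeasure n p with hP_def
  set Q : Measure (Fin n → Bool) := coinMeasure n q with hQ_def
  set S : Set ((Fin n → Bool) × Ω') := {z | A z.1 z.2 = true} with hS_def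
  have hSc : {z : (Fin n → Bool) × Ω' | A z.1 z.2 = false} = Sᶜ := by
    ext z; simp [hS_def]
  rw [hSc] at h1
  set B₁ : Set ((Fin n → Bool) × Ω') := toMeasurable (P.prod ν) Sᶜ with hB₁_def
  set B₂ : Set ((Fin n → Bool) × Ω') := toMeasurable (Q.prod ν) S with hB₂_def
  have hB₁m : MeasurableSet B₁ := measurableSet_toMeasurable _ _
  have hB₂m : MeasurableSet B₂ := measurableSet_toMeasurable _ _
  have hB₁le : (P.prod ν) B₁ ≤ ENNReal.ofReal δ := by
    rw [hB₁_def, measure_toMeasurable]; exact h1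
  have hB₂le : (Q.prod ν) B₂ ≤ ENNReal.ofReal δ := by
    rw [hB₂_def, measure_toMeasurable]; exact h2
  have hunion : B₁ ∪ B₂ = Set.univ := by
    apply Set.eq_univ_of_univ_subset
    calc Set.univ = Sᶜ ∪ S := by simp
    _ ⊆ B₁ ∪ B₂ :=
      Set.union_subset_union (subset_toMeasurable _ _) (subset_toMeasurable _ _)
  -- singleton values
  have hPx : ∀ x : (Fin n → Bool), P {x} = ENNReal.ofReal (W p x) :=
    fun x => coinMeasure_singleton hp0 hp1 x
  have hQx : ∀ x : (Fin n → Bool), Q {x} = ENNReal.ofReal (W q x) :=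
    fun x => coinMeasure_singleton hq0 hq1 x
  -- core inequality
  have key : ENNReal.ofReal (∑ x : (Fin n → Bool), min (W p x) (W q x)) ≤
      (P.prod ν) B₁ + (Q.prod ν) B₂ := by
    rw [Measure.prod_apply hB₁m, Measure.prod_apply hB₂m,
      lintegral_fintype, lintegral_fintype, ← Finset.sum_add_distrib,
      ENNReal.ofReal_sum_of_nonneg
        (fun x _ => le_min (hWnn p hp0 hp1 x) (hWnn q hq0 hq1 x))]
    apply Finset.sum_le_sum
    intro x _
    have hsl : ν (Prod.mk x ⁻¹' B₁) + ν (Prod.mk x ⁻¹' B₂) ≥ 1 := by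
      have : Prod.mk x ⁻¹' B₁ ∪ Prod.mk x ⁻¹' B₂ = Set.univ := by
        rw [← Set.preimage_union, hunion, Set.preimage_univ]
      calc (1:ℝ≥0∞) = ν Set.univ := (measure_univ).symm
      _ = ν (Prod.mk x ⁻¹' B₁ ∪ Prod.mk x ⁻¹' B₂) := by rw [this]
      _ ≤ _ := measure_union_le _ _
    have hmono : Monotone ENNReal.ofReal := fun a b hab => ENNReal.ofReal_le_ofReal hab
    rw [hmono.map_min, hPx x, hQx x]
    set m₀ := min (ENNReal.ofReal (W p x)) (ENNReal.ofReal (W q x))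
    calc m₀ = m₀ * 1 := (mul_one _).symm
    _ ≤ m₀ * (ν (Prod.mk x ⁻¹' B₁) + ν (Prod.mk x ⁻¹' B₂)) :=
        mul_le_mul_right hsl _
    _ = ν (Prod.mk x ⁻¹' B₁) * m₀ + ν (Prod.mk x ⁻¹' B₂) * m₀ := by ring
    _ ≤ ν (Prod.mk x ⁻¹' B₁) * ENNReal.ofReal (W p x) +
        ν (Prod.mk x ⁻¹' B₂) * ENNReal.ofReal (W q x) :=
        add_le_add (mul_le_mul_right (min_le_left _ _) _)
          (mul_le_mul_right (min_le_right _ _) _)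
  -- deduce real bound on the sum of minima
  have hm2δ : ∑ x : (Fin n → Bool), min (W p x) (W q x) ≤ 2 * δ := by
    have h2δ : (P.prod ν) B₁ + (Q.prod ν) B₂ ≤ ENNReal.ofReal (2 * δ) := by
      calc (P.prod ν) B₁ + (Q.prod ν) B₂ ≤ ENNReal.ofReal δ + ENNReal.ofReal δ :=
          add_le_add hB₁le hB₂le
      _ = ENNReal.ofReal (2 * δ) := by
          rw [← ENNReal.ofReal_add hδ.le hδ.le]; ring_nf
    exact (ENNReal.ofReal_le_ofReal_iff (by linarith)).mp (key.trans h2δ)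
  -- sums of weights are 1
  have hsumW : ∀ (r : ℝ), 0 ≤ r → r ≤ 1 → ∑ x : (Fin n → Bool), W r x = 1 := by
    intro r hr0 hr1
    have h1' : (coinMeasure n r) Set.univ = 1 := measure_univ
    have h2' : (∫⁻ x, 1 ∂(coinMeasure n r)) = ∑ x : (Fin n → Bool), 1 * (coinMeasure n r) {x} :=
      lintegral_fintype _
    rw [lintegral_one, h1'] at h2'
    have h3' : (1:ℝ≥0∞) = ENNReal.ofReal (∑ x : (Fin n → Bool), W r x) := by
      rw [ENNReal.ofReal_sum_of_nonneg (fun x _ => hWnn r hr0 hr1 x)]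
      rw [h2']
      exact Finset.sum_congr rfl fun x _ => by
        rw [one_mul, coinMeasure_singleton hr0 hr1 x]
    have := congrArg ENNReal.toReal h3'
    rw [ENNReal.toReal_one,
      ENNReal.toReal_ofReal (Finset.sum_nonneg fun x _ => hWnn r hr0 hr1 x)] at this
    exact this.symm
  -- Cauchy-Schwarz / Bhattacharyya step
  set m : ℝ := ∑ x : (Fin n → Bool), min (W p x) (W q x) with hm_def
  set M : ℝ := ∑ x : (Fin n → Bool), max (W p x) (W q x) with hM_def
  have hmM : m + M = 2 := by
    rw [hm_def, hM_def, ← Finset.sum_add_distrib]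
    have : ∀ x : (Fin n → Bool), min (W p x) (W q x) + max (W p x) (W q x) = W p x + W q x :=
      fun x => min_add_max _ _
    rw [Finset.sum_congr rfl fun x _ => this x, Finset.sum_add_distrib,
      hsumW p hp0 hp1, hsumW q hq0 hq1]
    norm_num
  have hm0 : 0 ≤ m :=
    Finset.sum_nonneg fun x _ => le_min (hWnn p hp0 hp1 x) (hWnn q hq0 hq1 x)
  have hprodconst : ∀ x : (Fin n → Bool), W p x * W q x = (p * q) ^ n := by
    intro x
    rw [hW_def]
    simp only
    rw [← Finset.prod_mul_distrib]
    have : ∀ i : Fin n, (if x i then p else 1 - p) * (if x i then q else 1 - q) = p * q := by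
      intro i
      by_cases h : x i <;> simp [h, hp_def, hq_def] <;> ring
    rw [Finset.prod_congr rfl fun i _ => this i, Finset.prod_const,
      Finset.card_univ, Fintype.card_fin]
  have hpq0 : (0:ℝ) ≤ p * q := mul_nonneg hp0 hq0
  have hCS : ((2:ℝ)^n * Real.sqrt ((p*q)^n))^2 ≤ m * M := by
    have hcs := Finset.sum_mul_sq_le_sq_mul_sq Finset.univ
      (fun x : (Fin n → Bool) => Real.sqrt (min (W p x) (W q x)))
      (fun x : (Fin n → Bool) => Real.sqrt (max (W p x) (W q x)))
    have hterm : ∀ x : (Fin n → Bool),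
        Real.sqrt (min (W p x) (W q x)) * Real.sqrt (max (W p x) (W q x)) =
          Real.sqrt ((p*q)^n) := by
      intro x
      rw [← Real.sqrt_mul (le_min (hWnn p hp0 hp1 x) (hWnn q hq0 hq1 x)),
        min_mul_max, hprodconst x]
    have hsq1 : ∀ x : (Fin n → Bool), Real.sqrt (min (W p x) (W q x)) ^ 2 = min (W p x) (W q x) :=
      fun x => Real.sq_sqrt (le_min (hWnn p hp0 hp1 x) (hWnn q hq0 hq1 x))
    have hsq2 : ∀ x : (Fin n → Bool), Real.sqrt (max (W p x) (W q x)) ^ 2 = max (W p x) (W q x) :=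
      fun x => Real.sq_sqrt (le_max_of_le_left (hWnn p hp0 hp1 x))
    rw [Finset.sum_congr rfl (fun x _ => hterm x), Finset.sum_const,
      Finset.card_univ] at hcs
    rw [Finset.sum_congr rfl (fun x _ => hsq1 x),
      Finset.sum_congr rfl (fun x _ => hsq2 x)] at hcs
    rw [← hm_def, ← hM_def] at hcs
    have hcard : Fintype.card (Fin n → Bool) = 2^n := by
      simp [Fintype.card_fun]
    rw [hcard] at hcs
    have hsmul : (2^n : ℕ) • Real.sqrt ((p*q)^n) = (2:ℝ)^n * Real.sqrt ((p*q)^n) := by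
      rw [nsmul_eq_mul]; push_cast; ring
    rw [hsmul] at hcs
    exact hcs
  have hCS' : (4 * (p * q)) ^ n ≤ m * M := by
    refine le_trans (le_of_eq ?_) hCS
    have h24 : ((2:ℝ)^n)^2 = 4^n := by
      rw [← pow_mul, mul_comm n 2, pow_mul]; norm_num
    have e2 : ((2:ℝ)^n * Real.sqrt ((p*q)^n))^2 = 4^n * (p*q)^n := by
      rw [mul_pow, Real.sq_sqrt (pow_nonneg hpq0 n), h24]
    rw [e2, mul_pow]
  have h4pq : 4 * (p * q) = 1 - 4 * ε^2 := by
    rw [hp_def, hq_def]; ring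
  have hfinal_le : (1 - 4 * ε^2) ^ n ≤ 4 * δ * (1 - δ) := by
    rw [← h4pq]
    refine hCS'.trans ?_
    have hM_eq : M = 2 - m := by linarith
    rw [hM_eq]
    nlinarith [hm2δ, hm0, hδ4]
  -- analytic contradiction
  set u : ℝ := Real.log (1/δ) with hu_def
  have hδeq : δ = Real.exp (-u) := by
    rw [hu_def, one_div, Real.log_inv, neg_neg, Real.exp_log hδ]
  have hu4 : Real.log 4 < u := by
    rw [hu_def]
    apply Real.log_lt_log (by norm_num)
    rw [lt_div_iff₀ hδ]; linarith
  have hlog2 : Real.log 2 < 0.6931471808 := Real.log_two_lt_d9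
  have hlog4 : Real.log 4 < 1.3862943616 := by
    have : (4:ℝ) = 2^2 := by norm_num
    rw [this, Real.log_pow]
    push_cast; linarith
  have hlog4pos : (1:ℝ) < Real.log 4 := by
    have : Real.log 4 = 2 * Real.log 2 := by
      have : (4:ℝ) = 2^2 := by norm_num
      rw [this, Real.log_pow]; push_cast; ring
    have h2 : 0.6931471803 < Real.log 2 := Real.log_two_gt_d9
    linarith
  have hupos : 0 < u := lt_trans (by linarith) hu4
  set a : ℝ := 1 - 4 * ε^2 with ha_def
  have ha34 : (3:ℝ)/4 < a := by rw [ha_def]; nlinarith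
  have ha0 : (0:ℝ) < a := by linarith
  have hloga : -Real.log a ≤ 6 * ε^2 := by
    have h := Real.log_le_sub_one_of_pos (inv_pos.mpr ha0)
    rw [Real.log_inv] at h
    have hinv : a⁻¹ ≤ 1 + 6 * ε^2 := by
      rw [inv_le_iff_one_le_mul₀ ha0]
      nlinarith
    linarith
  have hng : (n:ℝ) * (-Real.log a) < 0.06 * u := by
    have h6 : (n:ℝ) * (6 * ε^2) < 0.06 * u := by
      have hε2 : (0:ℝ) < ε^2 := by positivity
      have := mul_lt_mul_of_pos_right hn (by positivity : (0:ℝ) < 6 * ε^2)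
      calc (n:ℝ) * (6 * ε^2) < 1/100 * ε⁻¹^2 * Real.log (1/δ) * (6 * ε^2) := this
      _ = 0.06 * u * (ε⁻¹^2 * ε^2) := by rw [hu_def]; ring
      _ = 0.06 * u := by
          rw [inv_pow, inv_mul_cancel₀ (by positivity : ε^2 ≠ 0), mul_one]
    refine lt_of_le_of_lt ?_ h6
    exact mul_le_mul_of_nonneg_left hloga (Nat.cast_nonneg n)
  have hexp_gt : Real.exp (-(0.06 * u)) < a ^ n := by
    have : a ^ n = Real.exp ((n:ℝ) * Real.log a) := by
      rw [← Real.log_pow, Real.exp_log (pow_pos ha0 n)]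
    rw [this]
    apply Real.exp_lt_exp.mpr
    linarith
  -- show exp(-(0.06 u)) ≥ 4 δ (1-δ)
  have hbound : 4 * δ * (1 - δ) ≤ Real.exp (-(0.06 * u)) := by
    rw [hδeq]
    have hsplit : Real.exp (-(0.06 * u)) = Real.exp (-u) * Real.exp (0.94 * u) := by
      rw [← Real.exp_add]; ring_nf
    rw [hsplit]
    have hepos : 0 < Real.exp (-u) := Real.exp_pos _
    have hgoal : 4 * (1 - Real.exp (-u)) ≤ Real.exp (0.94 * u) := by
      rcases le_or_gt (3/2 : ℝ) u with hcase | hcase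
      · -- u ≥ 3/2 : exp(0.94 u) ≥ exp(1.41) > 4
        have h4lt : (4:ℝ) < Real.exp (0.94 * u) := by
          rw [← Real.exp_log (by norm_num : (0:ℝ) < 4)]
          apply Real.exp_lt_exp.mpr
          nlinarith
        have : 1 - Real.exp (-u) ≤ 1 := by linarith [hepos]
        nlinarith
      · -- u < 3/2 : use exp(0.94 u) > 4 exp(-0.06 u) ≥ 4 (1 - 0.06 u) ≥ 4(1 - exp(-u))
        have h1' : Real.exp (0.94 * u) = Real.exp u * Real.exp (-(0.06 * u)) := by
          rw [← Real.exp_add]; ring_nf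
        have h4u : (4:ℝ) < Real.exp u := by
          rw [← Real.exp_log (by norm_num : (0:ℝ) < 4)]
          exact Real.exp_lt_exp.mpr hu4
        have h2' : 1 - 0.06 * u ≤ Real.exp (-(0.06 * u)) := by
          linarith [Real.add_one_le_exp (-(0.06 * u))]
        have h3' : 0.06 * u ≤ Real.exp (-u) := by
          have he32 : Real.exp (-(3/2 : ℝ)) ≤ Real.exp (-u) :=
            Real.exp_le_exp.mpr (by linarith)
          have hee : Real.exp (3/2 : ℝ) < 11 := by
            have h2e : Real.exp (3/2 : ℝ) ≤ Real.exp 2 :=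
              Real.exp_le_exp.mpr (by norm_num)
            have : Real.exp 2 = Real.exp 1 * Real.exp 1 := by
              rw [← Real.exp_add]; norm_num
            nlinarith [Real.exp_one_lt_d9, Real.exp_pos (1:ℝ)]
          have : (0.09 : ℝ) < Real.exp (-(3/2:ℝ)) := by
            rw [Real.exp_neg]
            rw [lt_inv_comm₀ (by norm_num) (Real.exp_pos _)]
            linarith
          nlinarith
        have hexp06pos : 0 < Real.exp (-(0.06 * u)) := Real.exp_pos _
        calc 4 * (1 - Real.exp (-u)) ≤ 4 * (1 - 0.06 * u) := by linarith
        _ ≤ 4 * Real.exp (-(0.06 * u)) := by linarith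
        _ ≤ Real.exp u * Real.exp (-(0.06 * u)) := by nlinarith
        _ = Real.exp (0.94 * u) := h1'.symm
    calc 4 * Real.exp (-u) * (1 - Real.exp (-u))
        = Real.exp (-u) * (4 * (1 - Real.exp (-u))) := by ring
    _ ≤ Real.exp (-u) * Real.exp (0.94 * u) :=
        mul_le_mul_of_nonneg_left hgoal hepos.le
  -- contradiction
  linarith [hfinal_le, hbound, hexp_gt]
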